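/- Let I ∈ ℤ_{≥2}, J ∈ ℤ_{≥1}, b ∈ ((I+J-2)/(I+J-1), 1). Define 𝔥_*(z) = 𝔇_*(z)·𝔇_*(𝔭_*(z)) where 𝔇_*(z) = z^{J/I}·((bJ-(J-1))z - ((I+J)b-(I+J-1)))/(z-(Ib-(I-1))) and 𝔭_*(z) = ((I+1)z-1)/(z+I-1). Then for z(θ) = 1/(I+1) + (I/(I+1))e^{iθ}, θ ∈ (-π,π]\{0}, one has |𝔥_*(z(θ))| < 1. -/

import Mathlib

open Real

set_option maxHeartbeats 1000000

private lemma normSq_ab (a b cc ss : ℝ) (h : cc^2 + ss^2 = 1) :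
    Complex.normSq ((a:ℂ) + (b:ℂ) * ((cc:ℂ) + (ss:ℂ)*Complex.I)) = a^2 + 2*a*b*cc + b^2 := by
  simp [Complex.normSq_apply]
  ring_nf
  linear_combination b^2 * h

private lemma key_ineq (n m ε c : ℝ) (hn : 2 ≤ n) (hm : 1 ≤ m)
    (hε : 0 < ε) (hεb : ε * (n + m - 1) < 1) (hc1 : c < 1) (hc2 : -1 ≤ c) :
    ((1-(n+m+1)*ε)^2 + (1-m*ε)^2 - 2*(1-(n+m+1)*ε)*(1-m*ε)*c) *
      ((1-(m-1)*ε)^2 + (1-(n+m)*ε)^2 - 2*(1-(m-1)*ε)*(1-(n+m)*ε)*c)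
    < ((1-(n+1)*ε)^2 + 1 - 2*(1-(n+1)*ε)*c) *
      ((1+ε)^2 + (1-n*ε)^2 - 2*(1+ε)*(1-n*ε)*c) := by
  have hε1 : 2*ε < 1 := by nlinarith
  have h2 : 0 < 2 - (n+m)*ε := by nlinarith
  have hbr : 0 < (1+c)*(n+1)^2*ε^2 + (1-c)*((2-(n+m)*ε)^2 + (m^2-1)*ε^2) := by
    have h1 : 0 ≤ (1+c)*(n+1)^2*ε^2 :=
      mul_nonneg (mul_nonneg (by linarith) (sq_nonneg _)) (sq_nonneg _)
    have h3 : 0 < (1-c)*((2-(n+m)*ε)^2 + (m^2-1)*ε^2) := by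
      apply mul_pos (by linarith)
      nlinarith [sq_nonneg ε, sq_nonneg (2-(n+m)*ε)]
    linarith
  have hprod : 0 < 2*m*ε*(2-(n+m)*ε)*(1-c)*((1+c)*(n+1)^2*ε^2 + (1-c)*((2-(n+m)*ε)^2 + (m^2-1)*ε^2)) :=
    mul_pos (mul_pos (mul_pos (by positivity) h2) (by linarith)) hbr
  have hid : ((1-(n+1)*ε)^2 + 1 - 2*(1-(n+1)*ε)*c) *
      ((1+ε)^2 + (1-n*ε)^2 - 2*(1+ε)*(1-n*ε)*c)
      - ((1-(n+m+1)*ε)^2 + (1-m*ε)^2 - 2*(1-(n+m+1)*ε)*(1-m*ε)*c) *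
      ((1-(m-1)*ε)^2 + (1-(n+m)*ε)^2 - 2*(1-(m-1)*ε)*(1-(n+m)*ε)*c)
      = 2*m*ε*(2-(n+m)*ε)*(1-c)*((1+c)*(n+1)^2*ε^2 + (1-c)*((2-(n+m)*ε)^2 + (m^2-1)*ε^2)) := by
    ring
  linarith


/-- **Steepest descent condition (SD𝓜) for `𝔥_*`** (Lemma 6.3 of the paper).
Let `I ≥ 2`, `J ≥ 1`, `b ∈ ((I+J-2)/(I+J-1), 1)`,
`𝔭_*(z) = ((I+1)z-1)/(z+I-1)` and `𝔥_*(z) = 𝔇_*(z)𝔇_*(𝔭_*(z))` with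
`𝔇_*(z) = z^{J/I}((bJ-(J-1))z - ((I+J)b-(I+J-1)))/(z-(Ib-(I-1)))`; the modulus of the
fractional power factor of `𝔥_*` equals `(|z||𝔭_*(z)|)^{J/I}`.  Then for
`z(θ) = 1/(I+1) + (I/(I+1))e^{iθ}` with `θ ∈ (-π,π] \ {0}` one has `|𝔥_*(z(θ))| < 1`. -/
theorem hstar_circleM_bound (I J : ℕ) (hI : 2 ≤ I) (hJ : 1 ≤ J) (b : ℝ)
    (hb : b ∈ Set.Ioo (((I : ℝ) + J - 2) / ((I : ℝ) + J - 1)) 1)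
    (θ : ℝ) (hθ : θ ∈ Set.Ioc (-π) π) (hθ0 : θ ≠ 0) :
    let R : ℂ → ℂ := fun w =>
      (((b * J - ((J : ℝ) - 1) : ℝ) : ℂ) * w
          - ((((I : ℝ) + J) * b - ((I : ℝ) + J - 1) : ℝ) : ℂ)) /
        (w - (((I : ℝ) * b - ((I : ℝ) - 1) : ℝ) : ℂ))
    let z : ℂ := 1 / ((I : ℂ) + 1) + ((I : ℂ) / ((I : ℂ) + 1)) * Complex.exp (θ * Complex.I)
    let p : ℂ := (((I : ℂ) + 1) * z - 1) / (z + (I : ℂ) - 1)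
    (‖z‖ * ‖p‖) ^ ((J : ℝ) / I) *
        (‖R z‖ * ‖R p‖) < 1 := by
  intro R z p
  obtain ⟨hb1, hb2⟩ := hb
  obtain ⟨hθ1, hθ2⟩ := hθ
  have hR : ∀ w, R w = (((b * J - ((J : ℝ) - 1) : ℝ) : ℂ) * w
          - ((((I : ℝ) + J) * b - ((I : ℝ) + J - 1) : ℝ) : ℂ)) /
        (w - (((I : ℝ) * b - ((I : ℝ) - 1) : ℝ) : ℂ)) := fun _ => rfl
  have hz0 : z = 1 / ((I : ℂ) + 1) + ((I : ℂ) / ((I : ℂ) + 1)) * Complex.exp (θ * Complex.I) := rfl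
  have hp0 : p = (((I : ℂ) + 1) * z - 1) / (z + (I : ℂ) - 1) := rfl
  clear_value R z p
  -- real parameters
  have hn : (2:ℝ) ≤ (I:ℝ) := by exact_mod_cast hI
  have hm : (1:ℝ) ≤ (J:ℝ) := by exact_mod_cast hJ
  set n : ℝ := (I:ℝ) with hndef
  set m : ℝ := (J:ℝ) with hmdef
  set ε : ℝ := 1 - b with hεdef
  have hε : 0 < ε := by simp only [hεdef]; linarith
  have hεb : ε * (n + m - 1) < 1 := by
    have hpos : (0:ℝ) < n + m - 1 := by linarith
    rw [div_lt_iff₀ hpos] at hb1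
    nlinarith
  set c : ℝ := Real.cos θ with hcdef
  set s : ℝ := Real.sin θ with hsdef
  have hcs : c^2 + s^2 = 1 := by
    rw [hcdef, hsdef, add_comm]; exact Real.sin_sq_add_cos_sq θ
  have hc2 : -1 ≤ c := Real.neg_one_le_cos θ
  have hc1 : c < 1 := by
    rcases lt_or_eq_of_le (Real.cos_le_one θ) with h | h
    · exact h
    · exfalso; apply hθ0
      have hpi : 0 < π := Real.pi_pos
      exact (Real.cos_eq_one_iff_of_lt_of_lt (by linarith) (by linarith)).1 h
  -- positivity facts (early, small context)
  have hnpos : (0:ℝ) < n := by linarith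
  have hn1R : (0:ℝ) < n + 1 := by linarith
  have hDpos : (0:ℝ) < n^2 + 2*n*c + 1 := by
    nlinarith [mul_nonneg (le_of_lt hnpos) (show (0:ℝ) ≤ 1 + c by linarith), sq_nonneg (n-1)]
  have hεm : ε * m < 1 := by nlinarith [mul_pos hε (show (0:ℝ) < n - 1 by linarith)]
  have hεn : ε * n < 1 := by nlinarith [mul_nonneg (le_of_lt hε) (show (0:ℝ) ≤ m - 1 by linarith)]
  have hε2 : 2*ε < 1 := by
    nlinarith [mul_nonneg (le_of_lt hε) (show (0:ℝ) ≤ m - 1 by linarith),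
      mul_nonneg (le_of_lt hε) (show (0:ℝ) ≤ n - 2 by linarith)]
  have hw1 : -1 < 1 - (n+1)*ε := by
    nlinarith [mul_nonneg (le_of_lt hε) (show (0:ℝ) ≤ m - 1 by linarith)]
  have hcpos : (0:ℝ) < 1 - c := by linarith
  have hwpos : (0:ℝ) < 1 + (1 - (n+1)*ε) := by linarith
  have hR1pos : (0:ℝ) < (1-(n+1)*ε)^2 + 1 - 2*(1-(n+1)*ε)*c := by
    nlinarith [mul_pos hcpos (pow_pos hwpos 2),
      mul_nonneg (show (0:ℝ) ≤ 1 + c by linarith) (sq_nonneg (1 - (1-(n+1)*ε)))]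
  have hgpos : (0:ℝ) < 1 - n*ε := by nlinarith [hεn]
  have hupos : (0:ℝ) < n + 1 - (1 - n*ε) := by nlinarith [mul_pos hε hnpos]
  have hR2pos : (0:ℝ) < (1+ε)^2 + (1-n*ε)^2 - 2*(1+ε)*(1-n*ε)*c := by
    nlinarith [sq_nonneg ((1+ε) - (1-n*ε)),
      mul_pos (mul_pos (show (0:ℝ) < 1+ε by linarith) hgpos) hcpos]
  have hE : Complex.exp (θ * Complex.I) = (c : ℂ) + (s : ℂ) * Complex.I := by
    rw [Complex.exp_mul_I, hcdef, hsdef, Complex.ofReal_cos, Complex.ofReal_sin]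
  set E : ℂ := (c : ℂ) + (s : ℂ) * Complex.I with hEdef
  have hIc : (I : ℂ) = ((n:ℝ) : ℂ) := by rw [hndef]; push_cast; ring
  rw [hIc] at hz0 hp0
  rw [hE] at hz0
  -- nonvanishing
  have hn1 : ((n:ℝ):ℂ) + 1 ≠ 0 := by
    intro h; have := congrArg Complex.re h; simp at this; linarith
  have hn0 : ((n:ℝ):ℂ) ≠ 0 := by
    intro h; have := congrArg Complex.re h; simp at this; linarith
  have hnE : ((n:ℝ):ℂ) + E ≠ 0 := by
    intro h; have := congrArg Complex.re h; simp [hEdef] at this; linarith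
  have hz : z = (1 + ((n:ℝ):ℂ) * E) / (((n:ℝ):ℂ) + 1) := by
    rw [hz0]; field_simp
  have hnum : (((n:ℝ):ℂ) + 1) * z - 1 = ((n:ℝ):ℂ) * E := by
    rw [hz]; field_simp; ring
  have hden : z + ((n:ℝ):ℂ) - 1 = ((n:ℝ):ℂ) * (((n:ℝ):ℂ) + E) / (((n:ℝ):ℂ) + 1) := by
    rw [hz]; field_simp; ring
  have hp : p = ((((n:ℝ):ℂ) + 1) * E) / (((n:ℝ):ℂ) + E) := by
    rw [hp0, hnum, hden]
    rw [div_div_eq_mul_div, div_eq_div_iff (mul_ne_zero hn0 hnE) hnE]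
    ring
  -- coefficient abbreviations
  set aa : ℝ := b * m - (m - 1) with haadef
  set bb : ℝ := (n + m) * b - (n + m - 1) with hbbdef
  set gg : ℝ := n * b - (n - 1) with hggdef
  have haa : aa = 1 - m*ε := by rw [haadef, hεdef]; ring
  have hbb : bb = 1 - (n+m)*ε := by rw [hbbdef, hεdef]; ring
  have hgg : gg = 1 - n*ε := by rw [hggdef, hεdef]; ring
  -- complex numerator/denominator decompositions
  have e1 : (aa:ℂ) * z - (bb:ℂ) =
      (((aa - bb*(n+1) : ℝ):ℂ) + ((aa*n : ℝ):ℂ) * E) / (((n+1 : ℝ)):ℂ) := by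
    rw [hz]; push_cast; field_simp; ring
  have e2 : z - (gg:ℂ) =
      (((1 - gg*(n+1) : ℝ):ℂ) + ((n : ℝ):ℂ) * E) / (((n+1 : ℝ)):ℂ) := by
    rw [hz]; push_cast; field_simp; ring
  have e3 : (aa:ℂ) * p - (bb:ℂ) =
      (((-(bb*n) : ℝ):ℂ) + ((aa*(n+1) - bb : ℝ):ℂ) * E) / (((n:ℝ):ℂ) + E) := by
    rw [hp]; push_cast; field_simp; ring
  have e4 : p - (gg:ℂ) =
      (((-(gg*n) : ℝ):ℂ) + ((n + 1 - gg : ℝ):ℂ) * E) / (((n:ℝ):ℂ) + E) := by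
    rw [hp]; push_cast; field_simp; ring
  -- normSq values
  have hnsE : Complex.normSq (((n:ℝ):ℂ) + E) = n^2 + 2*n*c + 1 := by
    have := normSq_ab n 1 c s hcs
    rw [hEdef]
    simpa using this
  have hns1 : Complex.normSq ((aa:ℂ) * z - (bb:ℂ))
      = ((aa - bb*(n+1))^2 + 2*(aa - bb*(n+1))*(aa*n)*c + (aa*n)^2) / (n+1)^2 := by
    rw [e1, Complex.normSq_div, hEdef, normSq_ab _ _ _ _ hcs, Complex.normSq_ofReal]; ring
  have hns2 : Complex.normSq (z - (gg:ℂ))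
      = ((1 - gg*(n+1))^2 + 2*(1 - gg*(n+1))*n*c + n^2) / (n+1)^2 := by
    rw [e2, Complex.normSq_div, hEdef, normSq_ab _ _ _ _ hcs, Complex.normSq_ofReal]; ring
  have hns3 : Complex.normSq ((aa:ℂ) * p - (bb:ℂ))
      = ((-(bb*n))^2 + 2*(-(bb*n))*(aa*(n+1) - bb)*c + (aa*(n+1) - bb)^2) / (n^2 + 2*n*c + 1) := by
    rw [e3, Complex.normSq_div, hnsE, hEdef, normSq_ab _ _ _ _ hcs]
  have hns4 : Complex.normSq (p - (gg:ℂ))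
      = ((-(gg*n))^2 + 2*(-(gg*n))*(n + 1 - gg)*c + (n + 1 - gg)^2) / (n^2 + 2*n*c + 1) := by
    rw [e4, Complex.normSq_div, hnsE, hEdef, normSq_ab _ _ _ _ hcs]
  have E2 : (1 - gg*(n+1))^2 + 2*(1 - gg*(n+1))*n*c + n^2
      = n^2 * ((1-(n+1)*ε)^2 + 1 - 2*(1-(n+1)*ε)*c) := by
    rw [hgg]; ring
  have E4 : (-(gg*n))^2 + 2*(-(gg*n))*(n + 1 - gg)*c + (n + 1 - gg)^2
      = n^2 * ((1+ε)^2 + (1-n*ε)^2 - 2*(1+ε)*(1-n*ε)*c) := by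
    rw [hgg]; ring
  have h2pos : (0:ℝ) < (1 - gg*(n+1))^2 + 2*(1 - gg*(n+1))*n*c + n^2 := by
    rw [E2]; exact mul_pos (pow_pos hnpos 2) hR1pos
  have h4pos : (0:ℝ) < (-(gg*n))^2 + 2*(-(gg*n))*(n + 1 - gg)*c + (n + 1 - gg)^2 := by
    rw [E4]; exact mul_pos (pow_pos hnpos 2) hR2pos
  -- |z| * |p| = 1
  have hnsz : Complex.normSq z = (1 + 2*n*c + n^2) / (n+1)^2 := by
    have ez : z = ((((1:ℝ)):ℂ) + ((n:ℝ):ℂ) * E) / (((n+1:ℝ)):ℂ) := by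
      rw [hz]; push_cast; ring
    rw [ez, Complex.normSq_div, hEdef, normSq_ab _ _ _ _ hcs, Complex.normSq_ofReal]
    ring
  have hnsp : Complex.normSq p = (n+1)^2 / (n^2 + 2*n*c + 1) := by
    have ep : p = ((((0:ℝ)):ℂ) + ((n+1:ℝ):ℂ) * E) / (((n:ℝ):ℂ) + E) := by
      rw [hp]; push_cast; ring
    rw [ep, Complex.normSq_div, hnsE, hEdef, normSq_ab _ _ _ _ hcs]
    ring
  have habs : ‖z‖ * ‖p‖ = 1 := by
    have h1 : (‖z‖ * ‖p‖)^2 = 1 := by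
      rw [mul_pow, Complex.sq_norm, Complex.sq_norm, hnsz, hnsp]
      rw [div_mul_div_comm, div_eq_one_iff_eq (mul_ne_zero (pow_ne_zero 2 hn1R.ne') hDpos.ne')]
      ring
    have hx : 0 ≤ ‖z‖ * ‖p‖ :=
      mul_nonneg (norm_nonneg _) (norm_nonneg _)
    have h2 : (‖z‖ * ‖p‖ - 1) * (‖z‖ * ‖p‖ + 1) = 0 := by
      linear_combination h1
    rcases mul_eq_zero.1 h2 with h | h
    · linarith
    · linarith
  rw [habs, Real.one_rpow, one_mul]
  -- squared modulus of the rational part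
  have hsq : (‖R z‖ * ‖R p‖)^2 =
      (((aa - bb*(n+1))^2 + 2*(aa - bb*(n+1))*(aa*n)*c + (aa*n)^2) *
        ((-(bb*n))^2 + 2*(-(bb*n))*(aa*(n+1) - bb)*c + (aa*(n+1) - bb)^2)) /
      ((((1 - gg*(n+1))^2 + 2*(1 - gg*(n+1))*n*c + n^2)) *
        ((-(gg*n))^2 + 2*(-(gg*n))*(n + 1 - gg)*c + (n + 1 - gg)^2)) := by
    rw [mul_pow, Complex.sq_norm, Complex.sq_norm, hR, hR, Complex.normSq_div,
      Complex.normSq_div, hns1, hns2, hns3, hns4]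
    rw [div_div_div_cancel_right₀, div_div_div_cancel_right₀, div_mul_div_comm] <;>
      first
      | exact ne_of_gt hDpos
      | exact ne_of_gt (pow_pos hn1R 2)
  -- the key inequality
  have hfin : (((aa - bb*(n+1))^2 + 2*(aa - bb*(n+1))*(aa*n)*c + (aa*n)^2) *
        ((-(bb*n))^2 + 2*(-(bb*n))*(aa*(n+1) - bb)*c + (aa*(n+1) - bb)^2)) <
      ((((1 - gg*(n+1))^2 + 2*(1 - gg*(n+1))*n*c + n^2)) *
        ((-(gg*n))^2 + 2*(-(gg*n))*(n + 1 - gg)*c + (n + 1 - gg)^2)) := by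
    have hk := key_ineq n m ε c hn hm hε hεb hc1 hc2
    have E1 : (aa - bb*(n+1))^2 + 2*(aa - bb*(n+1))*(aa*n)*c + (aa*n)^2
        = n^2 * ((1-(n+m+1)*ε)^2 + (1-m*ε)^2 - 2*(1-(n+m+1)*ε)*(1-m*ε)*c) := by
      rw [haa, hbb]; ring
    have E3 : (-(bb*n))^2 + 2*(-(bb*n))*(aa*(n+1) - bb)*c + (aa*(n+1) - bb)^2
        = n^2 * ((1-(m-1)*ε)^2 + (1-(n+m)*ε)^2 - 2*(1-(m-1)*ε)*(1-(n+m)*ε)*c) := by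
      rw [haa, hbb]; ring
    rw [E1, E2, E3, E4]
    calc n^2 * ((1-(n+m+1)*ε)^2 + (1-m*ε)^2 - 2*(1-(n+m+1)*ε)*(1-m*ε)*c) *
          (n^2 * ((1-(m-1)*ε)^2 + (1-(n+m)*ε)^2 - 2*(1-(m-1)*ε)*(1-(n+m)*ε)*c))
        = n^4 * (((1-(n+m+1)*ε)^2 + (1-m*ε)^2 - 2*(1-(n+m+1)*ε)*(1-m*ε)*c) *
          ((1-(m-1)*ε)^2 + (1-(n+m)*ε)^2 - 2*(1-(m-1)*ε)*(1-(n+m)*ε)*c)) := by ring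
      _ < n^4 * ((((1-(n+1)*ε)^2 + 1 - 2*(1-(n+1)*ε)*c)) *
          ((1+ε)^2 + (1-n*ε)^2 - 2*(1+ε)*(1-n*ε)*c)) := by
          exact mul_lt_mul_of_pos_left hk (pow_pos hnpos 4)
      _ = n^2 * ((1-(n+1)*ε)^2 + 1 - 2*(1-(n+1)*ε)*c) *
          (n^2 * ((1+ε)^2 + (1-n*ε)^2 - 2*(1+ε)*(1-n*ε)*c)) := by ring
  have hX2 : (‖R z‖ * ‖R p‖)^2 < 1 := by
    rw [hsq, div_lt_one (mul_pos h2pos h4pos)]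
    exact hfin
  by_contra hcon
  push_neg at hcon
  have hXnn : (0:ℝ) ≤ ‖R z‖ * ‖R p‖ :=
    mul_nonneg (norm_nonneg _) (norm_nonneg _)
  have h1 : (1:ℝ) ≤ (‖R z‖ * ‖R p‖)^2 := by
    have := mul_le_mul hcon hcon zero_le_one hXnn
    calc (1:ℝ) = 1*1 := by ring
      _ ≤ _ := this
      _ = (‖R z‖ * ‖R p‖)^2 := by ring
  exact absurd hX2 (not_lt.2 h1)
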